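/- arXiv:2112.05815 — 5 statements merged into one kernel-verified Lean document; each statement's English description precedes it below -/
import Mathlib

section
/- Let X_j be a random vector in ℝ^k with δ_j^4 = E‖X_j‖^4 < ∞, let θ_j ∈ ℝ, and let Y_j = X_j·1{‖θ_j X_j‖ ≤ 1}. Then for all coordinate indices i, l ∈ {1,…,k}, θ_j²·|E(X_{ji}X_{jl}) − E(Y_{ji}Y_{jl})| ≤ θ_j^4·δ_j^4. -/
open MeasureTheory ProbabilityTheory Real
open scoped BigOperators

/-- Truncation `Y = X·1{‖c X‖ ≤ 1}`. -/
noncomputable def truncV {Ω : Type*} {k : ℕ} (X : Ω → EuclideanSpace ℝ (Fin k)) (c : ℝ) :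
    Ω → EuclideanSpace ℝ (Fin k) :=
  fun ω => if ‖c • X ω‖ ≤ 1 then X ω else 0

lemma coord_abs_le_norm {k : ℕ} (x : EuclideanSpace ℝ (Fin k)) (i : Fin k) :
    |x i| ≤ ‖x‖ := by
  rw [EuclideanSpace.norm_eq]
  rw [← Real.sqrt_sq_eq_abs]
  apply Real.sqrt_le_sqrt
  exact Finset.single_le_sum (f := fun j => ‖x j‖ ^ 2)
    (fun j _ => by positivity) (Finset.mem_univ i) |>.trans_eq' (by simp [sq_abs])

/-- second mixed moments of the truncated vector are close to those of
the original vector: `θ² |E X_i X_l − E Y_i Y_l| ≤ θ^4 δ^4`. -/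
theorem second_moment_truncation_bound
    {Ω : Type*} [MeasurableSpace Ω] {μ : Measure Ω} [IsProbabilityMeasure μ]
    {k : ℕ} (X : Ω → EuclideanSpace ℝ (Fin k))
    (hmeas : Measurable X)
    (hmom : Integrable (fun ω => ‖X ω‖ ^ 4) μ)
    (θ : ℝ) :
    ∀ i l : Fin k,
      θ ^ 2 * |(∫ ω, X ω i * X ω l ∂μ) - ∫ ω, truncV X θ ω i * truncV X θ ω l ∂μ| ≤
        θ ^ 4 * ∫ ω, ‖X ω‖ ^ 4 ∂μ := by
  intro i l
  have hY : Measurable (truncV X θ) := by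
    unfold truncV
    exact Measurable.ite (measurableSet_le ((hmeas.const_smul θ).norm) measurable_const)
      hmeas measurable_const
  have hn2 : Integrable (fun ω => ‖X ω‖ ^ 2) μ := by
    refine ((integrable_const (1:ℝ)).add hmom).mono' (hmeas.norm.pow_const 2).aestronglyMeasurable
      (Filter.Eventually.of_forall fun ω => ?_)
    have h := sq_nonneg (‖X ω‖ ^ 2 - 1)
    rw [Real.norm_eq_abs, abs_of_nonneg (by positivity)]
    simp only [Pi.add_apply]
    nlinarith [norm_nonneg (X ω)]
  have hYbound : ∀ ω (j : Fin k), |truncV X θ ω j| ≤ ‖X ω‖ := by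
    intro ω j
    unfold truncV
    split
    · exact coord_abs_le_norm _ j
    · simp
  have hA : Integrable (fun ω => X ω i * X ω l) μ := by
    refine hn2.mono' ?_ (Filter.Eventually.of_forall fun ω => ?_)
    · exact (((EuclideanSpace.proj i).continuous.measurable.comp hmeas).mul ((EuclideanSpace.proj l).continuous.measurable.comp hmeas)).aestronglyMeasurable
    · rw [Real.norm_eq_abs, abs_mul, sq]
      exact mul_le_mul (coord_abs_le_norm _ i) (coord_abs_le_norm _ l) (abs_nonneg _)
        (norm_nonneg _)
  have hB : Integrable (fun ω => truncV X θ ω i * truncV X θ ω l) μ := by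
    refine hn2.mono' ?_ (Filter.Eventually.of_forall fun ω => ?_)
    · exact (((EuclideanSpace.proj i).continuous.measurable.comp hY).mul ((EuclideanSpace.proj l).continuous.measurable.comp hY)).aestronglyMeasurable
    · rw [Real.norm_eq_abs, abs_mul, sq]
      exact mul_le_mul (hYbound ω i) (hYbound ω l) (abs_nonneg _) (norm_nonneg _)
  have hsub : (∫ ω, X ω i * X ω l ∂μ) - (∫ ω, truncV X θ ω i * truncV X θ ω l ∂μ)
      = ∫ ω, (X ω i * X ω l - truncV X θ ω i * truncV X θ ω l) ∂μ :=
    (integral_sub hA hB).symm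
  have hpt : ∀ ω, |X ω i * X ω l - truncV X θ ω i * truncV X θ ω l| ≤ θ ^ 2 * ‖X ω‖ ^ 4 := by
    intro ω
    unfold truncV
    split
    · next h =>
      simp only [sub_self, abs_zero]
      positivity
    · next h =>
      push_neg at h
      simp only [PiLp.zero_apply, mul_zero, sub_zero]
      have h1 : (1:ℝ) < |θ| * ‖X ω‖ := by simpa [norm_smul] using h
      have h2 : |X ω i * X ω l| ≤ ‖X ω‖ ^ 2 := by
        rw [abs_mul, sq]
        exact mul_le_mul (coord_abs_le_norm _ i) (coord_abs_le_norm _ l) (abs_nonneg _)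
          (norm_nonneg _)
      have h1' : 1 < θ ^ 2 * ‖X ω‖ ^ 2 := by
        nlinarith [abs_nonneg θ, norm_nonneg (X ω), sq_abs θ]
      have h3 : ‖X ω‖ ^ 2 ≤ θ ^ 2 * ‖X ω‖ ^ 4 := by
        nlinarith [h1', sq_nonneg (‖X ω‖), mul_nonneg (sq_nonneg (‖X ω‖)) (le_of_lt (sub_pos.mpr h1'))]
      linarith
    -- end
  have habs : |(∫ ω, X ω i * X ω l ∂μ) - ∫ ω, truncV X θ ω i * truncV X θ ω l ∂μ|
      ≤ θ ^ 2 * ∫ ω, ‖X ω‖ ^ 4 ∂μ := by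
    rw [hsub, ← integral_const_mul]
    calc |∫ ω, (X ω i * X ω l - truncV X θ ω i * truncV X θ ω l) ∂μ|
        ≤ ∫ ω, |X ω i * X ω l - truncV X θ ω i * truncV X θ ω l| ∂μ :=
          by simpa [Real.norm_eq_abs] using
            norm_integral_le_integral_norm (μ := μ)
              (fun ω => X ω i * X ω l - truncV X θ ω i * truncV X θ ω l)
      _ ≤ ∫ ω, θ ^ 2 * ‖X ω‖ ^ 4 ∂μ :=
          integral_mono (hA.sub hB).abs (hmom.const_mul _)
            (fun ω => hpt ω)
  calc θ ^ 2 * |(∫ ω, X ω i * X ω l ∂μ) - ∫ ω, truncV X θ ω i * truncV X θ ω l ∂μ|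
      ≤ θ ^ 2 * (θ ^ 2 * ∫ ω, ‖X ω‖ ^ 4 ∂μ) := by
        apply mul_le_mul_of_nonneg_left habs (sq_nonneg θ)
    _ = θ ^ 4 * ∫ ω, ‖X ω‖ ^ 4 ∂μ := by ring
end

section
/- Let X_j be a random vector in ℝ^k with zero mean and identity covariance matrix, let θ_j ∈ ℝ, and let Y_j = X_j·1{‖θ_j X_j‖ ≤ 1}. Then for every t ∈ ℝ^k, |E exp(i·θ_j⟨t, Y_j⟩)| ≤ |g_j(θ_j t)| + 2k·θ_j², where g_j(t) = E exp(i⟨t, X_j⟩) is the characteristic function of X_j. -/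
open MeasureTheory ProbabilityTheory Real
open scoped RealInnerProductSpace BigOperators

/-- Characteristic function `t ↦ E exp(i⟨t, W⟩)` of a random vector `W`. -/
noncomputable def charFn {Ω : Type*} [MeasurableSpace Ω] (μ : Measure Ω) {k : ℕ}
    (W : Ω → EuclideanSpace ℝ (Fin k)) (t : EuclideanSpace ℝ (Fin k)) : ℂ :=
  ∫ ω, Complex.exp ((⟪t, W ω⟫ : ℂ) * Complex.I) ∂μ

/-- the characteristic function of the truncated vector is close to
that of the original vector: `|E exp(iθ⟨t,Y⟩)| ≤ |g(θt)| + 2kθ²`. -/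
theorem charFn_trunc_bound
    {Ω : Type*} [MeasurableSpace Ω] {μ : Measure Ω} [IsProbabilityMeasure μ]
    {k : ℕ} (X : Ω → EuclideanSpace ℝ (Fin k))
    (hmeas : Measurable X)
    (hmean : ∫ ω, X ω ∂μ = 0)
    (hcov : ∀ i l : Fin k, ∫ ω, X ω i * X ω l ∂μ = if i = l then 1 else 0)
    (θ : ℝ) :
    ∀ t : EuclideanSpace ℝ (Fin k),
      ‖charFn μ (truncV X θ) (θ • t)‖ ≤
        ‖charFn μ X (θ • t)‖ + 2 * k * θ ^ 2 := by
  intro t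
  set s := θ • t with hs
  -- The bad set where truncation changes something
  have hnmeas : Measurable fun ω => ‖θ • X ω‖ := (hmeas.const_smul θ).norm
  have hA : MeasurableSet {ω | ¬ ‖θ • X ω‖ ≤ 1} :=
    (measurableSet_le hnmeas measurable_const).compl
  -- Integrability of second moments
  have hX2int : ∀ i : Fin k, Integrable (fun ω => X ω i * X ω i) μ := by
    intro i
    by_contra h
    have h1 := hcov i i
    rw [integral_undef h] at h1
    simp at h1
  -- ‖X ω‖² as sum of squares
  have hnormsq : ∀ ω, ‖X ω‖ ^ 2 = ∑ i, X ω i * X ω i := by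
    intro ω
    rw [EuclideanSpace.norm_sq_eq]
    refine Finset.sum_congr rfl fun i _ => ?_
    rw [Real.norm_eq_abs, sq_abs, sq]
  have hsumint : Integrable (fun ω => ‖X ω‖ ^ 2) μ := by
    have : Integrable (fun ω => ∑ i, X ω i * X ω i) μ :=
      integrable_finset_sum _ fun i _ => hX2int i
    exact this.congr (Filter.Eventually.of_forall fun ω => (hnormsq ω).symm)
  have hNint : ∫ ω, ‖X ω‖ ^ 2 ∂μ = (k : ℝ) := by
    calc ∫ ω, ‖X ω‖ ^ 2 ∂μ = ∫ ω, ∑ i, X ω i * X ω i ∂μ := by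
          exact integral_congr_ae (Filter.Eventually.of_forall fun ω => hnormsq ω)
      _ = ∑ i, ∫ ω, X ω i * X ω i ∂μ := integral_finset_sum _ fun i _ => hX2int i
      _ = ∑ i : Fin k, (1 : ℝ) := by
          refine Finset.sum_congr rfl fun i _ => ?_
          simpa using hcov i i
      _ = (k : ℝ) := by simp
  -- Chebyshev
  have hf : Integrable (fun ω => ‖θ • X ω‖ ^ 2) μ := by
    have : (fun ω => ‖θ • X ω‖ ^ 2) = fun ω => θ ^ 2 * ‖X ω‖ ^ 2 := by
      funext ω
      rw [norm_smul]
      simp [mul_pow, sq_abs]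
    rw [this]
    exact hsumint.const_mul _
  have hfint : ∫ ω, ‖θ • X ω‖ ^ 2 ∂μ = θ ^ 2 * k := by
    have : (fun ω => ‖θ • X ω‖ ^ 2) = fun ω => θ ^ 2 * ‖X ω‖ ^ 2 := by
      funext ω
      rw [norm_smul]
      simp [mul_pow, sq_abs]
    rw [this, integral_const_mul, hNint]
  have hcheb : (μ {ω | ¬ ‖θ • X ω‖ ≤ 1}).toReal ≤ θ ^ 2 * k := by
    have h1 : (1 : ℝ) * (μ {ω | (1:ℝ) ≤ ‖θ • X ω‖ ^ 2}).toReal ≤ ∫ ω, ‖θ • X ω‖ ^ 2 ∂μ :=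
      mul_meas_ge_le_integral_of_nonneg
        (Filter.Eventually.of_forall fun ω => sq_nonneg _) hf 1
    have hsub : {ω | ¬ ‖θ • X ω‖ ≤ 1} ⊆ {ω | (1:ℝ) ≤ ‖θ • X ω‖ ^ 2} := by
      intro ω hω
      simp only [Set.mem_setOf_eq, not_le] at hω ⊢
      nlinarith
    have hmono := measure_mono (μ := μ) hsub
    have hfin : μ {ω | (1:ℝ) ≤ ‖θ • X ω‖ ^ 2} ≠ ⊤ := measure_ne_top μ _
    have := ENNReal.toReal_mono hfin hmono
    rw [one_mul] at h1
    linarith [hfint ▸ h1]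
  -- Integrands
  set eX : Ω → ℂ := fun ω => Complex.exp ((⟪s, X ω⟫ : ℂ) * Complex.I) with heX
  set eY : Ω → ℂ := fun ω => Complex.exp ((⟪s, truncV X θ ω⟫ : ℂ) * Complex.I) with heY
  have hmY : Measurable (truncV X θ) := by
    unfold truncV
    exact Measurable.ite (measurableSet_le hnmeas measurable_const) hmeas measurable_const
  have hminner : ∀ (W : Ω → EuclideanSpace ℝ (Fin k)), Measurable W →
      Measurable fun ω => (⟪s, W ω⟫ : ℝ) := by
    intro W hW
    exact (measurable_const.inner hW : Measurable fun ω => (⟪s, W ω⟫ : ℝ))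
  have hint : ∀ (W : Ω → EuclideanSpace ℝ (Fin k)), Measurable W →
      Integrable (fun ω => Complex.exp ((⟪s, W ω⟫ : ℂ) * Complex.I)) μ := by
    intro W hW
    have hm : Measurable fun ω => Complex.exp ((⟪s, W ω⟫ : ℂ) * Complex.I) :=
      (Complex.measurable_exp.comp
        (((Complex.measurable_ofReal.comp (hminner W hW)).mul measurable_const)))
    refine Integrable.mono' (integrable_const (1:ℝ)) hm.aestronglyMeasurable ?_
    filter_upwards with ω
    rw [Complex.norm_exp_ofReal_mul_I]
  have hintX := hint X hmeas
  have hintY := hint (truncV X θ) hmY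
  -- main estimate
  have hdiff : ‖charFn μ (truncV X θ) s - charFn μ X s‖ ≤ 2 * (θ ^ 2 * k) := by
    rw [charFn, charFn, ← integral_sub hintY hintX]
    have h1 : ‖∫ ω, (eY ω - eX ω) ∂μ‖ ≤ ∫ ω, ‖eY ω - eX ω‖ ∂μ := norm_integral_le_integral_norm _
    refine h1.trans ?_
    have h2 : ∫ ω, ‖eY ω - eX ω‖ ∂μ ≤
        ∫ ω, ({ω | ¬ ‖θ • X ω‖ ≤ 1}).indicator (fun _ => (2:ℝ)) ω ∂μ := by
      refine integral_mono ((hintY.sub hintX).norm) ((integrable_const (2:ℝ)).indicator hA) ?_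
      intro ω
      simp only [Set.indicator_apply, Set.mem_setOf_eq]
      by_cases hω : ‖θ • X ω‖ ≤ 1
      · have htr : truncV X θ ω = X ω := if_pos hω
        rw [if_neg (by simpa using hω)]
        simp [heY, heX, htr]
      · rw [if_pos hω]
        calc ‖eY ω - eX ω‖ ≤ ‖eY ω‖ + ‖eX ω‖ := norm_sub_le _ _
          _ = 2 := by
            simp only [heY, heX, Complex.norm_exp_ofReal_mul_I]
            norm_num
    refine h2.trans ?_
    rw [integral_indicator hA]
    simp only [integral_const, measureReal_def, MeasurableSet.univ, Measure.restrict_apply, Set.univ_inter,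
      smul_eq_mul]
    calc (μ {ω | ¬ ‖θ • X ω‖ ≤ 1}).toReal * 2 ≤ (θ ^ 2 * k) * 2 := by
          exact mul_le_mul_of_nonneg_right hcheb (by norm_num)
      _ = 2 * (θ ^ 2 * k) := by ring
  calc ‖charFn μ (truncV X θ) s‖
      ≤ ‖charFn μ X s‖ + ‖charFn μ (truncV X θ) s - charFn μ X s‖ := by
        have h := norm_sub_norm_le (charFn μ (truncV X θ) s) (charFn μ X s)
        linarith
      _ ≤ ‖charFn μ X s‖ + 2 * (θ ^ 2 * k) := by linarith
      _ = ‖charFn μ X s‖ + 2 * k * θ ^ 2 := by ring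
end

section
/- Let X″ be a nonnegative random variable with E X″ = 1 and E(X″)² ≤ 2δ^4 for some δ^4 ≥ 1 satisfying E[X″·1{X″ ≤ 10δ^4}] ≥ 4/5. Then there exists an absolute constant c̄ > 0 such that for every τ > 0, E min{τ·X″, 1} ≥ c̄·min{τ, 1/δ^4}. -/
open MeasureTheory ProbabilityTheory Real

/-- a lower bound on `E min{τX″, 1}` for a nonnegative random variable
with unit mean, bounded second moment and non-degenerate truncated first moment. -/
theorem expectation_min_lower_bound :
    ∃ c : ℝ, 0 < c ∧
      ∀ (Ω : Type) [MeasurableSpace Ω] (μ : Measure Ω), IsProbabilityMeasure μ →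
      ∀ (Y : Ω → ℝ) (δ4 : ℝ),
        Measurable Y →
        (∀ ω, 0 ≤ Y ω) →
        Integrable Y μ →
        Integrable (fun ω => Y ω ^ 2) μ →
        (∫ ω, Y ω ∂μ = 1) →
        (∫ ω, Y ω ^ 2 ∂μ ≤ 2 * δ4) →
        1 ≤ δ4 →
        (4 / 5 ≤ ∫ ω, (if Y ω ≤ 10 * δ4 then Y ω else 0) ∂μ) →
        ∀ τ : ℝ, 0 < τ →
          c * min τ (1 / δ4) ≤ ∫ ω, min (τ * Y ω) 1 ∂μ := by
  refine ⟨2/25, by norm_num, ?_⟩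
  intro Ω _ μ hμ Y δ4 hY hY0 hInt _hInt2 _hmean _hsec hδ hTrunc τ hτ
  have hδ0 : (0:ℝ) < δ4 := lt_of_lt_of_le one_pos hδ
  set t : ℝ := min τ (1/(10*δ4)) with ht
  have ht0 : 0 ≤ t := le_min hτ.le (by positivity)
  have hZmeas : Measurable (fun ω => if Y ω ≤ 10*δ4 then Y ω else 0) :=
    Measurable.ite (measurableSet_le hY measurable_const) hY measurable_const
  have hZint : Integrable (fun ω => if Y ω ≤ 10*δ4 then Y ω else 0) μ := by
    refine hInt.mono hZmeas.aestronglyMeasurable (Filter.Eventually.of_forall fun ω => ?_)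
    by_cases h : Y ω ≤ 10*δ4 <;> simp [h, abs_of_nonneg (hY0 ω)]
    exact hY0 ω
  have hMint : Integrable (fun ω => min (τ * Y ω) 1) μ := by
    refine (integrable_const (1:ℝ)).mono'
      (((hY.const_mul τ).min measurable_const).aestronglyMeasurable)
      (Filter.Eventually.of_forall fun ω => ?_)
    rw [Real.norm_eq_abs, abs_of_nonneg (le_min (mul_nonneg hτ.le (hY0 ω)) one_pos.le)]
    exact min_le_right _ _
  have hpt : ∀ ω, t * (if Y ω ≤ 10*δ4 then Y ω else 0) ≤ min (τ * Y ω) 1 := by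
    intro ω
    by_cases h : Y ω ≤ 10*δ4
    · simp only [h, if_true]
      refine le_min (mul_le_mul_of_nonneg_right (min_le_left _ _) (hY0 ω)) ?_
      calc t * Y ω ≤ (1/(10*δ4)) * (10*δ4) :=
            mul_le_mul (min_le_right _ _) h (hY0 ω) (by positivity)
        _ = 1 := by field_simp
    · simp only [h, if_false, mul_zero]
      exact le_min (mul_nonneg hτ.le (hY0 ω)) one_pos.le
  have hstep : t * ∫ ω, (if Y ω ≤ 10*δ4 then Y ω else 0) ∂μ ≤ ∫ ω, min (τ * Y ω) 1 ∂μ := by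
    rw [← integral_const_mul]
    exact integral_mono (hZint.const_mul t) hMint hpt
  have hlow : (1/10) * min τ (1/δ4) ≤ t := by
    refine le_min ?_ ?_
    · have := min_le_left τ (1/δ4); linarith
    · have := min_le_right τ (1/δ4)
      have : (1/10) * min τ (1/δ4) ≤ (1/10) * (1/δ4) := by linarith
      calc (1/10) * min τ (1/δ4) ≤ (1/10) * (1/δ4) := this
        _ = 1/(10*δ4) := by field_simp
  have hm0 : 0 ≤ min τ (1/δ4) := le_min hτ.le (by positivity)
  have h1 : (2/25) * min τ (1/δ4) ≤ t * (4/5) := by nlinarith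
  have h2 : t * (4/5) ≤ t * ∫ ω, (if Y ω ≤ 10*δ4 then Y ω else 0) ∂μ := by
    have : (4:ℝ)/5 ≤ ∫ ω, (if Y ω ≤ 10*δ4 then Y ω else 0) ∂μ := hTrunc
    nlinarith
  linarith
end

section
/- Let Θ = (Θ_1,…,Θ_n) be uniformly distributed on the unit sphere S^{n−1}, let δ_1^4,…,δ_n^4 be positive reals, and set δ^4 = (1/n)Σ_{j=1}^n δ_j^4. Then there exist absolute constants C₄, c₄ > 0 such that for every t > 0, P(Σ_{j=1}^n δ_j^4·Θ_j^4 ≥ t·δ^4/n) ≤ C₄·exp(−c₄·√t). -/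
open MeasureTheory ProbabilityTheory Real
open scoped ENNReal BigOperators

/-- The normalized uniform (Lebesgue) measure on the unit sphere `S^{n-1} ⊆ ℝ^n`. -/
noncomputable def uniformSphere (n : ℕ) :
    Measure (Metric.sphere (0 : EuclideanSpace ℝ (Fin n)) 1) :=
  (((volume : Measure (EuclideanSpace ℝ (Fin n))).toSphere Set.univ)⁻¹ •
    (volume : Measure (EuclideanSpace ℝ (Fin n))).toSphere)

section Auxiliary

open Set Metric
open scoped NNReal

noncomputable section

namespace QSSC

variable {n : ℕ}

lemma polar_moment (hn : 0 < n) (i : Fin n) (m : ℕ) :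
    ∫ x : EuclideanSpace ℝ (Fin n), (x i) ^ (2*m) * Real.exp (-‖x‖^2/2) =
      (∫ θ : Metric.sphere (0 : EuclideanSpace ℝ (Fin n)) 1,
          ((θ : EuclideanSpace ℝ (Fin n)) i) ^ (2*m)
          ∂((volume : Measure (EuclideanSpace ℝ (Fin n))).toSphere)) *
      ∫ r in Set.Ioi (0:ℝ), r ^ (n-1+2*m) * Real.exp (-r^2/2) := by
  set E := EuclideanSpace ℝ (Fin n)
  set μ : Measure E := volume with hμ
  haveI : Nontrivial E := by
    apply Module.nontrivial_of_finrank_pos (R := ℝ)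
    rw [finrank_euclideanSpace_fin]; exact hn
  have hdim : Module.finrank ℝ E = n := finrank_euclideanSpace_fin
  set f : Metric.sphere (0:E) 1 → ℝ := fun θ => ((θ : E) i) ^ (2*m) with hf
  set g : ℝ → ℝ := fun r => r ^ (2*m) * Real.exp (-r^2/2) with hg
  calc ∫ x : E, (x i) ^ (2*m) * Real.exp (-‖x‖^2/2) ∂μ
      = ∫ x : ({0}ᶜ : Set E), ((x : E) i) ^ (2*m) * Real.exp (-‖(x:E)‖^2/2)
          ∂(μ.comap Subtype.val) := by
        rw [integral_subtype_comap (measurableSet_singleton (0:E)).compl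
          (fun x => (x i) ^ (2*m) * Real.exp (-‖x‖^2/2)),
          MeasureTheory.restrict_compl_singleton]
    _ = ∫ p : Metric.sphere (0:E) 1 × Set.Ioi (0:ℝ), f p.1 * g p.2.1
          ∂(μ.toSphere.prod (Measure.volumeIoiPow (Module.finrank ℝ E - 1))) := by
        rw [← (μ.measurePreserving_homeomorphUnitSphereProd).integral_comp
          (Homeomorph.measurableEmbedding _) (fun p => f p.1 * g p.2.1)]
        apply integral_congr_ae
        filter_upwards with x
        have hx : (x : E) ≠ 0 := x.2
        have hxn : ‖(x:E)‖ ≠ 0 := norm_ne_zero_iff.2 hx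
        simp only [homeomorphUnitSphereProd_apply_fst_coe, homeomorphUnitSphereProd_apply_snd_coe,
          hf, hg]
        have h1 : ((‖(x:E)‖⁻¹ • (x:E) : E) i) = ‖(x:E)‖⁻¹ * (x:E) i := rfl
        rw [h1]
        have h2 : (‖(x:E)‖⁻¹ * (x:E) i)^(2*m) * ‖(x:E)‖^(2*m) = ((x:E) i)^(2*m) := by
          rw [mul_pow, inv_pow]
          field_simp
        rw [← h2]; ring
    _ = (∫ θ : Metric.sphere (0:E) 1, f θ ∂μ.toSphere) *
          ∫ q : Set.Ioi (0:ℝ), g q.1 ∂(Measure.volumeIoiPow (Module.finrank ℝ E - 1)) :=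
        integral_prod_mul f (fun q : Set.Ioi (0:ℝ) => g q.1)
    _ = (∫ θ : Metric.sphere (0:E) 1, f θ ∂μ.toSphere) *
          ∫ r in Set.Ioi (0:ℝ), r ^ (n-1+2*m) * Real.exp (-r^2/2) := by
        congr 1
        simp only [Measure.volumeIoiPow, ENNReal.ofReal]
        rw [integral_withDensity_eq_integral_smul
          ((measurable_subtype_coe.pow_const _).real_toNNReal) (fun q : Set.Ioi (0:ℝ) => g q.1),
          integral_subtype_comap measurableSet_Ioi (fun a : ℝ => Real.toNNReal (a ^ (Module.finrank ℝ E - 1)) • g a)]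
        apply setIntegral_congr_fun measurableSet_Ioi
        intro r hr
        have hr0 : (0:ℝ) < r := hr
        show ((r ^ (Module.finrank ℝ E - 1)).toNNReal : ℝ≥0) • g r
            = r ^ (n-1+2*m) * Real.exp (-r^2/2)
        rw [NNReal.smul_def, Real.coe_toNNReal _ (pow_nonneg hr0.le _)]
        simp only [hg, smul_eq_mul, hdim]
        rw [pow_add]
        ring


lemma pi_moment (i : Fin n) (m : ℕ) :
    ∫ x : EuclideanSpace ℝ (Fin n), (x i) ^ (2*m) * Real.exp (-‖x‖^2/2) =
      (∫ s : ℝ, s ^ (2*m) * Real.exp (-s^2/2)) *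
        (∫ s : ℝ, Real.exp (-s^2/2)) ^ (n-1) := by
  set E := EuclideanSpace ℝ (Fin n)
  set f : Fin n → ℝ → ℝ :=
    fun j s => (if j = i then s ^ (2*m) else 1) * Real.exp (-s^2/2) with hfdef
  have step1 : ∫ x : E, (x i) ^ (2*m) * Real.exp (-‖x‖^2/2) =
      ∫ y : Fin n → ℝ, ∏ j, f j (y j) := by
    rw [← ((EuclideanSpace.volume_preserving_symm_measurableEquiv_toLp (Fin n)).symm).integral_comp'
      (fun x : EuclideanSpace ℝ (Fin n) => (x i) ^ (2*m) * Real.exp (-‖x‖^2/2))]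
    apply integral_congr_ae
    filter_upwards with y
    have hcoord : ∀ j : Fin n, ((MeasurableEquiv.toLp 2 (Fin n → ℝ)) y : EuclideanSpace ℝ (Fin n)) j = y j :=
      fun j => rfl
    have hnorm : ‖((MeasurableEquiv.toLp 2 (Fin n → ℝ)) y : EuclideanSpace ℝ (Fin n))‖^2
        = ∑ j, (y j)^2 := by
      rw [EuclideanSpace.norm_eq]
      rw [Real.sq_sqrt (by positivity)]
      refine Finset.sum_congr rfl fun j _ => ?_
      rw [hcoord, Real.norm_eq_abs, sq_abs]
    simp only [MeasurableEquiv.symm_symm, hcoord, hnorm, hfdef]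
    rw [Finset.prod_mul_distrib]
    rw [← Real.exp_sum]
    have : ∑ j, -(y j)^2/2 = -(∑ j, (y j)^2)/2 := by
      rw [← Finset.sum_div, ← Finset.sum_neg_distrib]
    rw [this]
    congr 1
    rw [Finset.prod_ite_eq' Finset.univ i (fun j => (fun s => s ^ (2*m)) (y j))]
    simp
  rw [step1, MeasureTheory.volume_pi, MeasureTheory.integral_fintype_prod_eq_prod f]
  rw [← Finset.mul_prod_erase Finset.univ _ (Finset.mem_univ i)]
  have h1 : ∫ s : ℝ, f i s = ∫ s : ℝ, s ^ (2*m) * Real.exp (-s^2/2) := by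
    simp [hfdef]
  have h2 : ∏ j ∈ Finset.univ.erase i, ∫ s : ℝ, f j s
      = (∫ s : ℝ, Real.exp (-s^2/2)) ^ (n-1) := by
    rw [Finset.prod_congr rfl (fun j hj => ?_), Finset.prod_const,
      Finset.card_erase_of_mem (Finset.mem_univ i), Finset.card_univ, Fintype.card_fin]
    have hji : j ≠ i := (Finset.mem_erase.mp hj).1
    simp [hfdef, hji]
  rw [h1, h2]

/-- `J q = ∫_0^∞ r^q e^{-r²/2} dr`. -/
def J (q : ℕ) : ℝ := ∫ r in Set.Ioi (0:ℝ), r ^ q * Real.exp (-r^2/2)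

lemma J_eq (q : ℕ) :
    J q = (1/2:ℝ) ^ (-((q:ℝ)+1)/2) * (1/2) * Real.Gamma (((q:ℝ)+1)/2) := by
  rw [J, ← integral_rpow_mul_exp_neg_mul_rpow (p := 2) (q := (q:ℝ)) (b := 1/2)
    (by norm_num) (lt_of_lt_of_le (by norm_num) (Nat.cast_nonneg q)) (by norm_num)]
  apply setIntegral_congr_fun measurableSet_Ioi
  intro r _
  show r ^ q * Real.exp (-r^2/2) = r ^ ((q:ℝ)) * Real.exp (-(1/2) * r ^ ((2:ℝ)))
  rw [Real.rpow_natCast, show ((2:ℝ)) = ((2:ℕ):ℝ) by norm_num, Real.rpow_natCast]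
  ring_nf

lemma J_pos (q : ℕ) : 0 < J q := by
  rw [J_eq]
  have h1 : (0:ℝ) < (((q:ℝ)+1)/2) := by positivity
  have := Real.Gamma_pos_of_pos h1
  positivity

lemma Gamma_ladder (x : ℝ) (hx : 0 < x) (m : ℕ) :
    Real.Gamma (x + m) = Real.Gamma x * ∏ i ∈ Finset.range m, (x + i) := by
  induction m with
  | zero => simp
  | succ k ih =>
      have h : x + ((k+1 : ℕ) : ℝ) = (x + k) + 1 := by push_cast; ring
      rw [h, Real.Gamma_add_one (by positivity), ih, Finset.prod_range_succ]
      ring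

lemma half_rpow_neg_nat (m : ℕ) : (1/2:ℝ) ^ (-(m:ℝ)) = 2 ^ m := by
  rw [Real.rpow_neg (by norm_num), Real.rpow_natCast]
  rw [show (1/2:ℝ) = 2⁻¹ by norm_num, inv_pow, inv_inv]

lemma L1 (hn : 0 < n) (m : ℕ) :
    J (n-1+2*m) = J (n-1) * 2 ^ m * ∏ i ∈ Finset.range m, ((n:ℝ)/2 + i) := by
  have hc1 : ((n-1+2*m : ℕ) : ℝ) = (n:ℝ) - 1 + 2*m := by
    push_cast [Nat.cast_sub hn]; ring
  have hc2 : ((n-1 : ℕ) : ℝ) = (n:ℝ) - 1 := by push_cast [Nat.cast_sub hn]; ring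
  have hγ : (0:ℝ) < (n:ℝ)/2 := by positivity
  rw [J_eq, J_eq, hc1, hc2]
  have e1 : ((n:ℝ) - 1 + 2*m + 1)/2 = (n:ℝ)/2 + (m:ℕ) := by push_cast; ring
  have e2 : ((n:ℝ) - 1 + 1)/2 = (n:ℝ)/2 := by ring
  rw [show -((n:ℝ) - 1 + 2*m + 1)/2 = -((n:ℝ) - 1 + 1)/2 + (-(m:ℝ)) by push_cast; ring]
  rw [e1, e2, Gamma_ladder _ hγ m,
    Real.rpow_add (by norm_num), half_rpow_neg_nat]
  ring

lemma L2 (m : ℕ) :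
    (∫ s : ℝ, s ^ (2*m) * Real.exp (-s^2/2)) =
      (∫ s : ℝ, Real.exp (-s^2/2)) * 2 ^ m * ∏ i ∈ Finset.range m, ((1:ℝ)/2 + i) := by
  have hG2 : (∫ s : ℝ, s ^ (2*m) * Real.exp (-s^2/2)) = 2 * J (2*m) := by
    rw [J, ← integral_comp_abs (f := fun t => t ^ (2*m) * Real.exp (-t^2/2))]
    apply integral_congr_ae
    filter_upwards with s
    rw [sq_abs, pow_abs, abs_of_nonneg ((even_two_mul m).pow_nonneg s)]
  have hJ0 : J 0 = ∫ r in Set.Ioi (0:ℝ), Real.exp (-r^2/2) := by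
    rw [J]
    apply setIntegral_congr_fun measurableSet_Ioi
    intro r _
    simp
  have hG0 : (∫ s : ℝ, Real.exp (-s^2/2)) = 2 * J 0 := by
    rw [hJ0, ← integral_comp_abs (f := fun t => Real.exp (-t^2/2))]
    apply integral_congr_ae
    filter_upwards with s
    rw [sq_abs]
  have hcast : ((2*m : ℕ) : ℝ) = 2*(m:ℝ) := by push_cast; ring
  rw [hG2, hG0, J_eq, J_eq, hcast]
  have e1 : (2*(m:ℝ) + 1)/2 = (1:ℝ)/2 + (m:ℕ) := by push_cast; ring
  rw [show -(2*(m:ℝ) + 1)/2 = -((0:ℝ)+1)/2 + (-(m:ℝ)) by push_cast; ring]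
  rw [e1, Gamma_ladder _ (by norm_num : (0:ℝ) < 1/2) m,
    Real.rpow_add (by norm_num), half_rpow_neg_nat]
  norm_num
  ring


lemma G0_pos : 0 < ∫ s : ℝ, Real.exp (-s^2/2) := by
  have h : (∫ s : ℝ, Real.exp (-s^2/2)) = ∫ s : ℝ, Real.exp (-(1/2) * s^2) := by
    apply integral_congr_ae; filter_upwards with s; ring_nf
  rw [h, integral_gaussian]
  positivity

lemma T_pos (hn : 0 < n) :
    0 < ((volume : Measure (EuclideanSpace ℝ (Fin n))).toSphere Set.univ).toReal := by
  have i : Fin n := ⟨0, hn⟩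
  have h0 := (polar_moment hn i 0).symm.trans (pi_moment i 0)
  have hT : (∫ θ : Metric.sphere (0 : EuclideanSpace ℝ (Fin n)) 1,
      ((θ : EuclideanSpace ℝ (Fin n)) i) ^ (2*0)
      ∂((volume : Measure (EuclideanSpace ℝ (Fin n))).toSphere)) =
      ((volume : Measure (EuclideanSpace ℝ (Fin n))).toSphere Set.univ).toReal := by
    simp [measureReal_def]
  have hg : (∫ s : ℝ, s ^ (2*0) * Real.exp (-s^2/2)) = ∫ s : ℝ, Real.exp (-s^2/2) := by
    simp
  rw [hT, hg] at h0
  have hJ : J (n-1+2*0) = ∫ r in Set.Ioi (0:ℝ), r ^ (n-1+2*0) * Real.exp (-r^2/2) := rfl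
  rw [← hJ] at h0
  nlinarith [J_pos (n-1+2*0), G0_pos, pow_pos (G0_pos) (n-1),
    ((volume : Measure (EuclideanSpace ℝ (Fin n))).toSphere Set.univ).toReal_nonneg]

lemma tos_ne_zero (hn : 0 < n) :
    ((volume : Measure (EuclideanSpace ℝ (Fin n))).toSphere Set.univ) ≠ 0 := by
  intro h
  have := T_pos hn
  rw [h] at this
  simp at this

lemma tos_ne_top :
    ((volume : Measure (EuclideanSpace ℝ (Fin n))).toSphere Set.univ) ≠ ⊤ :=
  measure_ne_top _ _

lemma uniformSphere_probability' (hn : 0 < n) :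
    IsProbabilityMeasure (uniformSphere n) := by
  constructor
  rw [uniformSphere, Measure.smul_apply, smul_eq_mul,
    ENNReal.inv_mul_cancel (tos_ne_zero hn) tos_ne_top]

lemma uniform_moment_eq (hn : 0 < n) (i : Fin n) (m : ℕ) :
    ∫ θ : Metric.sphere (0 : EuclideanSpace ℝ (Fin n)) 1,
        ((θ : EuclideanSpace ℝ (Fin n)) i) ^ (2*m) ∂(uniformSphere n) =
      ∏ j ∈ Finset.range m, (((1:ℝ)/2 + j)/((n:ℝ)/2 + j)) := by
  set τ := (volume : Measure (EuclideanSpace ℝ (Fin n))).toSphere with hτ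
  set T := (τ Set.univ).toReal with hT
  set Im := ∫ θ : Metric.sphere (0 : EuclideanSpace ℝ (Fin n)) 1,
      ((θ : EuclideanSpace ℝ (Fin n)) i) ^ (2*m) ∂τ with hIm
  set G0 := ∫ s : ℝ, Real.exp (-s^2/2) with hG0
  set P1 := ∏ j ∈ Finset.range m, ((n:ℝ)/2 + j) with hP1
  set P2 := ∏ j ∈ Finset.range m, ((1:ℝ)/2 + j) with hP2
  have hJa : 0 < J (n-1) := J_pos _
  have hG0p : 0 < G0 := G0_pos
  have hP1p : 0 < P1 := Finset.prod_pos fun j _ => by positivity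
  have hTp : 0 < T := T_pos hn
  -- main identities
  have h1 : Im * J (n-1+2*m) = (G0 * 2 ^ m * P2) * G0 ^ (n-1) := by
    have := (polar_moment hn i m).symm.trans (pi_moment i m)
    rw [show (∫ r in Set.Ioi (0:ℝ), r ^ (n-1+2*m) * Real.exp (-r^2/2)) = J (n-1+2*m) from rfl,
      L2 m] at this
    exact this
  have h0 : T * J (n-1) = G0 * G0 ^ (n-1) := by
    have h := (polar_moment hn i 0).symm.trans (pi_moment i 0)
    have hTi : (∫ θ : Metric.sphere (0 : EuclideanSpace ℝ (Fin n)) 1,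
        ((θ : EuclideanSpace ℝ (Fin n)) i) ^ (2*0) ∂τ) = T := by simp [hT, hτ, measureReal_def]
    have hg : (∫ s : ℝ, s ^ (2*0) * Real.exp (-s^2/2)) = G0 := by simp [hG0]
    rw [hTi, hg,
      show (∫ r in Set.Ioi (0:ℝ), r ^ (n-1+2*0) * Real.exp (-r^2/2)) = J (n-1+2*0) from rfl,
      show n-1+2*0 = n-1 by ring] at h
    exact h
  rw [L1 hn m] at h1
  -- cancel to get Im * P1 = P2 * T
  rw [← hP1] at h1
  have h2 : Im * P1 = P2 * T := by
    have h2m : (0:ℝ) < 2 ^ m := by positivity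
    apply mul_right_cancel₀ (b := J (n-1) * 2 ^ m) (by positivity)
    linear_combination h1 - (2:ℝ) ^ m * P2 * h0
  have hσ : (∫ θ : Metric.sphere (0 : EuclideanSpace ℝ (Fin n)) 1,
      ((θ : EuclideanSpace ℝ (Fin n)) i) ^ (2*m) ∂(uniformSphere n)) = T⁻¹ * Im := by
    rw [uniformSphere, integral_smul_measure, ← hτ, ENNReal.toReal_inv, ← hT, ← hIm,
      smul_eq_mul]
  rw [hσ, Finset.prod_div_distrib, ← hP2, ← hP1]
  rw [eq_div_iff hP1p.ne']
  field_simp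
  linarith [h2]

lemma uniform_moment_le (hn : 0 < n) (i : Fin n) (m : ℕ) :
    ∫ θ : Metric.sphere (0 : EuclideanSpace ℝ (Fin n)) 1,
        ((θ : EuclideanSpace ℝ (Fin n)) i) ^ (2*m) ∂(uniformSphere n) ≤
      ((2*m:ℝ)/n) ^ m := by
  have hnp : (0:ℝ) < n := by exact_mod_cast hn
  rw [uniform_moment_eq hn i m]
  calc ∏ j ∈ Finset.range m, (((1:ℝ)/2 + j)/((n:ℝ)/2 + j))
      ≤ ∏ _j ∈ Finset.range m, ((2*m:ℝ)/n) := by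
        apply Finset.prod_le_prod
        · intro j _; positivity
        · intro j hj
          have hjm : (j:ℝ) + 1 ≤ (m:ℝ) := by
            exact_mod_cast Nat.succ_le_of_lt (Finset.mem_range.mp hj)
          have key : ((1:ℝ)/2 + j)/((n:ℝ)/2 + j) ≤ (m:ℝ)/((n:ℝ)/2) := by
            apply div_le_div₀ (by positivity) (by linarith) (by positivity) (by linarith)
          have : (m:ℝ)/((n:ℝ)/2) = (2*m:ℝ)/n := by
            field_simp
          linarith [key, this.le]
    _ = ((2*m:ℝ)/n) ^ m := by rw [Finset.prod_const, Finset.card_range]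

lemma sphere_integrable_of_continuous (hn : 0 < n)
    {f : Metric.sphere (0 : EuclideanSpace ℝ (Fin n)) 1 → ℝ} (hf : Continuous f) :
    Integrable f (uniformSphere n) := by
  haveI : IsProbabilityMeasure (uniformSphere n) := uniformSphere_probability' hn
  haveI : IsFiniteMeasureOnCompacts (uniformSphere n) :=
    ⟨fun _ _ => measure_lt_top _ _⟩
  exact integrableOn_univ.mp (hf.continuousOn.integrableOn_compact isCompact_univ)

lemma main_bound (hn : 0 < n) (d : Fin n → ℝ) (hd : ∀ j, 0 < d j)
    (t : ℝ) (ht : 0 < t) (k : ℕ) (hk : 1 ≤ k) :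
    uniformSphere n {θ : Metric.sphere (0 : EuclideanSpace ℝ (Fin n)) 1 |
        t * (((∑ j, d j) / n) / n) ≤ ∑ j, d j * (θ.1 j) ^ 4} ≤
      ENNReal.ofReal ((16 * k^2 / t) ^ k) := by
  haveI : IsProbabilityMeasure (uniformSphere n) := uniformSphere_probability' hn
  have hnp : (0:ℝ) < n := by exact_mod_cast hn
  set σ := uniformSphere n with hσ
  set S : Metric.sphere (0 : EuclideanSpace ℝ (Fin n)) 1 → ℝ :=
    fun θ => ∑ j, d j * (θ.1 j) ^ 4 with hS
  set D := ∑ j, d j with hD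
  have hDp : 0 < D := Finset.sum_pos (fun j _ => hd j) ⟨⟨0, hn⟩, Finset.mem_univ _⟩
  set a := t * ((D / n) / n) with ha
  have hap : 0 < a := by positivity
  -- continuity
  have hcoord : ∀ j : Fin n, Continuous
      (fun θ : Metric.sphere (0 : EuclideanSpace ℝ (Fin n)) 1 => θ.1 j) := by
    intro j
    exact ((EuclideanSpace.proj (𝕜 := ℝ) j).continuous).comp continuous_subtype_val
  have hScont : Continuous S := by
    apply continuous_finset_sum
    intro j _
    exact continuous_const.mul ((hcoord j).pow 4)
  have hSnonneg : ∀ θ, 0 ≤ S θ := fun θ =>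
    Finset.sum_nonneg fun j _ => mul_nonneg (hd j).le (by positivity)
  -- pointwise Jensen
  have jensen : ∀ θ, (S θ) ^ k ≤ D ^ (k-1) * ∑ j, d j * (θ.1 j) ^ (4*k) := by
    intro θ
    have hmem : ∀ j : Fin n, j ∈ Finset.univ → ((θ.1 j) ^ 4 : ℝ) ∈ Set.Ici (0:ℝ) :=
      fun j _ => Set.mem_Ici.mpr (by positivity)
    have hw : ∑ j : Fin n, d j / D = 1 := by
      rw [← Finset.sum_div, ← hD, div_self hDp.ne']
    have key := (convexOn_pow (𝕜 := ℝ) k).map_sum_le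
      (fun j _ => div_nonneg (hd j).le hDp.le) hw hmem
    simp only [smul_eq_mul] at key
    have lhs_eq : ∑ j, d j / D * (θ.1 j) ^ 4 = S θ / D := by
      rw [hS, Finset.sum_div]
      exact Finset.sum_congr rfl fun j _ => by ring
    rw [lhs_eq] at key
    have rhs_eq : ∑ j, d j / D * ((θ.1 j) ^ 4) ^ k = (∑ j, d j * (θ.1 j) ^ (4*k)) / D := by
      rw [Finset.sum_div]
      refine Finset.sum_congr rfl fun j _ => ?_
      rw [← pow_mul]
      ring
    rw [rhs_eq] at key
    have hDk : (0:ℝ) < D ^ k := by positivity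
    have expand : (S θ) ^ k = D ^ k * (S θ / D) ^ k := by
      rw [div_pow]
      field_simp
    rw [expand]
    calc D ^ k * (S θ / D) ^ k ≤ D ^ k * ((∑ j, d j * (θ.1 j) ^ (4*k)) / D) := by
          apply mul_le_mul_of_nonneg_left key hDk.le
      _ = D ^ (k-1) * ∑ j, d j * (θ.1 j) ^ (4*k) := by
          rw [show k = (k-1)+1 from (Nat.succ_pred_eq_of_pos hk).symm]
          rw [pow_succ]
          field_simp
          ring_nf
          rw [Nat.add_sub_cancel_left]
  -- integral bound
  have hint4k : ∀ j : Fin n, Integrable (fun θ : Metric.sphere (0 : EuclideanSpace ℝ (Fin n)) 1 =>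
      d j * (θ.1 j) ^ (4*k)) σ :=
    fun j => sphere_integrable_of_continuous hn (continuous_const.mul ((hcoord j).pow _))
  have hintSk : Integrable (fun θ => (S θ)^k) σ :=
    sphere_integrable_of_continuous hn (hScont.pow k)
  have moment : ∫ θ, (S θ)^k ∂σ ≤ D ^ k * ((4*k:ℝ)/n) ^ (2*k) := by
    have step1 : ∫ θ, (S θ)^k ∂σ ≤
        ∫ θ, D ^ (k-1) * ∑ j, d j * (θ.1 j) ^ (4*k) ∂σ := by
      apply integral_mono hintSk
      · exact ((integrable_finset_sum _ (fun j _ => hint4k j)).const_mul _)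
      · exact jensen
    have step2 : ∫ θ, D ^ (k-1) * ∑ j, d j * (θ.1 j) ^ (4*k) ∂σ
        = D ^ (k-1) * ∑ j, d j * ∫ θ, (θ.1 j) ^ (4*k) ∂σ := by
      rw [integral_const_mul, integral_finset_sum _ (fun j _ => hint4k j)]
      congr 1
      exact Finset.sum_congr rfl fun j _ => integral_const_mul _ _
    have step3 : ∑ j, d j * ∫ θ, (θ.1 j) ^ (4*k) ∂σ ≤ D * ((4*k:ℝ)/n) ^ (2*k) := by
      have hmom : ∀ j : Fin n, ∫ θ, (θ.1 j) ^ (4*k) ∂σ ≤ ((4*k:ℝ)/n) ^ (2*k) := by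
        intro j
        have h := uniform_moment_le hn j (2*k)
        rw [show 2*(2*k) = 4*k from by ring] at h
        refine le_trans h (le_of_eq ?_)
        congr 1
        push_cast
        ring
      calc ∑ j, d j * ∫ θ, (θ.1 j) ^ (4*k) ∂σ
          ≤ ∑ j : Fin n, d j * (((4*k:ℝ)/n) ^ (2*k)) := by
            apply Finset.sum_le_sum
            intro j _
            exact mul_le_mul_of_nonneg_left (hmom j) (hd j).le
        _ = D * ((4*k:ℝ)/n) ^ (2*k) := by rw [← Finset.sum_mul]
    calc ∫ θ, (S θ)^k ∂σ ≤ D ^ (k-1) * ∑ j, d j * ∫ θ, (θ.1 j) ^ (4*k) ∂σ := by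
          rw [← step2]; exact step1
      _ ≤ D ^ (k-1) * (D * ((4*k:ℝ)/n) ^ (2*k)) := by
          apply mul_le_mul_of_nonneg_left step3 (by positivity)
      _ = D ^ k * ((4*k:ℝ)/n) ^ (2*k) := by
          have hDk : D ^ (k-1) * D = D ^ k := by
            rw [← pow_succ, Nat.sub_add_cancel hk]
          rw [← hDk]; ring
  -- Markov
  have markov : σ {θ | a ≤ S θ} ≤ ENNReal.ofReal ((∫ θ, (S θ)^k ∂σ) / a^k) := by
    have hsub : {θ : Metric.sphere (0 : EuclideanSpace ℝ (Fin n)) 1 | a ≤ S θ} ⊆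
        {θ | a^k ≤ (S θ)^k} := fun θ h => pow_le_pow_left₀ hap.le h k
    calc σ {θ | a ≤ S θ} ≤ σ {θ | a^k ≤ (S θ)^k} := measure_mono hsub
      _ = ENNReal.ofReal ((σ {θ | a^k ≤ (S θ)^k}).toReal) := by
          rw [ENNReal.ofReal_toReal (measure_ne_top _ _)]
      _ ≤ ENNReal.ofReal ((∫ θ, (S θ)^k ∂σ) / a^k) := by
          apply ENNReal.ofReal_le_ofReal
          rw [le_div_iff₀ (by positivity)]
          have := mul_meas_ge_le_integral_of_nonneg
            (Filter.Eventually.of_forall (fun θ => pow_nonneg (hSnonneg θ) k))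
            hintSk (a^k)
          rw [measureReal_def] at this
          linarith [this]
  refine le_trans markov ?_
  apply ENNReal.ofReal_le_ofReal
  rw [div_le_iff₀ (by positivity)]
  calc ∫ θ, (S θ)^k ∂σ ≤ D ^ k * ((4*k:ℝ)/n) ^ (2*k) := moment
    _ = (16 * k^2 / t) ^ k * a ^ k := by
        rw [pow_mul, ← mul_pow, ← mul_pow]
        congr 1
        rw [ha, hD]
        field_simp
        ring

end QSSC

end

end Auxiliary

/-- concentration of the quartic sum `Σ δ_j⁴ Θ_j⁴` for a uniform
direction `Θ` on the sphere. -/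
theorem quartic_sum_sphere_concentration :
    ∃ C₄ c₄ : ℝ, 0 < C₄ ∧ 0 < c₄ ∧
      ∀ (n : ℕ), 0 < n →
      ∀ (δ4 : Fin n → ℝ), (∀ j, 0 < δ4 j) →
      ∀ t : ℝ, 0 < t →
        uniformSphere n {θ : Metric.sphere (0 : EuclideanSpace ℝ (Fin n)) 1 |
            t * (((∑ j, δ4 j) / n) / n) ≤ ∑ j, δ4 j * (θ.1 j) ^ 4} ≤
          ENNReal.ofReal (C₄ * Real.exp (-c₄ * Real.sqrt t)) := by
  refine ⟨Real.exp 2, 1/6, Real.exp_pos 2, by norm_num, ?_⟩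
  intro n hn δ4 hδ t ht
  haveI : IsProbabilityMeasure (uniformSphere n) := QSSC.uniformSphere_probability' hn
  have hst : 0 ≤ Real.sqrt t := Real.sqrt_nonneg t
  by_cases hcase : Real.sqrt t ≤ 12
  · -- trivial regime
    have h1 : (1:ℝ) ≤ Real.exp 2 * Real.exp (-(1/6) * Real.sqrt t) := by
      rw [← Real.exp_add]
      have : (0:ℝ) ≤ 2 + -(1/6) * Real.sqrt t := by linarith
      calc (1:ℝ) = Real.exp 0 := (Real.exp_zero).symm
        _ ≤ _ := Real.exp_le_exp.mpr this
    calc uniformSphere n _ ≤ 1 := prob_le_one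
      _ = ENNReal.ofReal 1 := by norm_num
      _ ≤ ENNReal.ofReal (Real.exp 2 * Real.exp (-(1/6) * Real.sqrt t)) :=
          ENNReal.ofReal_le_ofReal h1
  · push_neg at hcase
    set k : ℕ := ⌊Real.sqrt t / 12⌋₊ with hk
    have hk1 : 1 ≤ k := by
      apply Nat.le_floor
      rw [Nat.cast_one, le_div_iff₀ (by norm_num : (0:ℝ) < 12)]
      linarith
    have hk2 : (k:ℝ) ≤ Real.sqrt t / 12 := Nat.floor_le (by positivity)
    have hk3 : Real.sqrt t / 12 < (k:ℝ) + 1 := Nat.lt_floor_add_one _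
    refine le_trans (QSSC.main_bound hn δ4 hδ t ht k hk1) (ENNReal.ofReal_le_ofReal ?_)
    have ht' : Real.sqrt t ^ 2 = t := Real.sq_sqrt ht.le
    have h19 : 16 * (k:ℝ)^2 / t ≤ 1/9 := by
      have hksq : (k:ℝ)^2 ≤ (Real.sqrt t / 12)^2 := by
        apply pow_le_pow_left₀ (by positivity) hk2
      rw [div_le_iff₀ ht]
      nlinarith [ht']
    have hnn : (0:ℝ) ≤ 16 * (k:ℝ)^2 / t := by positivity
    have hexp2 : (1:ℝ)/9 ≤ Real.exp (-2) := by
      have he : Real.exp 2 ≤ 9 := by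
        have h1 : Real.exp 2 = Real.exp 1 * Real.exp 1 := by
          rw [← Real.exp_add]; norm_num
        nlinarith [Real.exp_one_lt_d9, Real.exp_pos 1]
      rw [Real.exp_neg, one_div]
      exact inv_anti₀ (Real.exp_pos 2) he
    calc (16 * (k:ℝ)^2 / t) ^ k ≤ ((1:ℝ)/9) ^ k := pow_le_pow_left₀ hnn h19 k
      _ ≤ (Real.exp (-2)) ^ k := pow_le_pow_left₀ (by norm_num) hexp2 k
      _ = Real.exp (-2 * k) := by
          rw [← Real.exp_nat_mul]
          congr 1
          ring
      _ ≤ Real.exp 2 * Real.exp (-(1/6) * Real.sqrt t) := by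
          rw [← Real.exp_add]
          apply Real.exp_le_exp.mpr
          linarith
end

section
/- Let X_1,…,X_n be independent random vectors in ℝ^k with zero mean and finite fourth absolute moments δ_j^4 = E‖X_j‖^4, let θ ∈ S^{n−1}, and let Y_j = X_j·1{‖θ_j X_j‖ ≤ 1}. Then the weighted mean vector A_n = Σ_{j=1}^n θ_j·E Y_j satisfies ‖A_n‖ ≤ √k·Σ_{j=1}^n θ_j^4·δ_j^4 = √k·δ_θ^4. -/
open MeasureTheory ProbabilityTheory Real
open scoped BigOperators

/-- the weighted mean vector `A_n = Σ θ_j E Y_j` of the truncated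
vectors satisfies `‖A_n‖ ≤ √k · δ_θ⁴`. -/
theorem weighted_mean_trunc_bound
    {Ω : Type*} [MeasurableSpace Ω] {μ : Measure Ω} [IsProbabilityMeasure μ]
    {k n : ℕ} (X : Fin n → Ω → EuclideanSpace ℝ (Fin k))
    (hmeas : ∀ j, Measurable (X j))
    (hindep : iIndepFun X μ)
    (hmean : ∀ j, ∫ ω, X j ω ∂μ = 0)
    (hmom : ∀ j, Integrable (fun ω => ‖X j ω‖ ^ 4) μ)
    (θ : Fin n → ℝ) (hθ : ∑ j, θ j ^ 2 = 1) :
    ‖∑ j, θ j • ∫ ω, truncV (X j) (θ j) ω ∂μ‖ ≤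
      Real.sqrt k * ∑ j, θ j ^ 4 * ∫ ω, ‖X j ω‖ ^ 4 ∂μ := by
  classical
  have hXint : ∀ j, Integrable (X j) μ := by
    intro j
    refine ((integrable_const (1:ℝ)).add (hmom j)).mono'
      (hmeas j).aestronglyMeasurable ?_
    filter_upwards with ω
    have h := norm_nonneg (X j ω)
    simp only [Pi.add_apply]
    by_cases h1 : ‖X j ω‖ ≤ 1
    · nlinarith [pow_nonneg h 4]
    · push_neg at h1
      have := le_self_pow₀ h1.le (by norm_num : (4:ℕ) ≠ 0)
      linarith
  have htrmeas : ∀ j, Measurable (truncV (X j) (θ j)) := by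
    intro j
    exact Measurable.ite
      (measurableSet_le ((measurable_const_smul _).comp (hmeas j)).norm measurable_const)
      (hmeas j) measurable_const
  have htrint : ∀ j, Integrable (truncV (X j) (θ j)) μ := by
    intro j
    refine (hXint j).norm.mono' (htrmeas j).aestronglyMeasurable ?_
    filter_upwards with ω
    unfold truncV
    split <;> simp [norm_nonneg]
  -- the key per-term bound
  have key : ∀ j, ‖θ j • ∫ ω, truncV (X j) (θ j) ω ∂μ‖ ≤ θ j ^ 4 * ∫ ω, ‖X j ω‖ ^ 4 ∂μ := by
    intro j
    set Z : Ω → EuclideanSpace ℝ (Fin k) := fun ω => X j ω - truncV (X j) (θ j) ω with hZ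
    have hZint : Integrable Z μ := (hXint j).sub (htrint j)
    have hI : ∫ ω, truncV (X j) (θ j) ω ∂μ = - ∫ ω, Z ω ∂μ := by
      have : ∫ ω, Z ω ∂μ = (∫ ω, X j ω ∂μ) - ∫ ω, truncV (X j) (θ j) ω ∂μ :=
        integral_sub (hXint j) (htrint j)
      rw [hmean j] at this
      simp [this]
    have hZbound : ∀ ω, ‖Z ω‖ ≤ |θ j| ^ 3 * ‖X j ω‖ ^ 4 := by
      intro ω
      have hb := norm_nonneg (X j ω)
      have ha := abs_nonneg (θ j)
      simp only [hZ, truncV]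
      split_ifs with h
      · simp only [sub_self, norm_zero]
        positivity
      · push_neg at h
        rw [norm_smul, Real.norm_eq_abs] at h
        simp only [sub_zero]
        have h3 : 1 ≤ (|θ j| * ‖X j ω‖) ^ 3 := one_le_pow₀ h.le
        nlinarith [mul_nonneg ha hb]
    have hnormZ : ‖∫ ω, Z ω ∂μ‖ ≤ |θ j| ^ 3 * ∫ ω, ‖X j ω‖ ^ 4 ∂μ := by
      calc ‖∫ ω, Z ω ∂μ‖ ≤ ∫ ω, ‖Z ω‖ ∂μ := norm_integral_le_integral_norm _
        _ ≤ ∫ ω, |θ j| ^ 3 * ‖X j ω‖ ^ 4 ∂μ := by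
            refine integral_mono hZint.norm ((hmom j).const_mul _) ?_
            intro ω; exact hZbound ω
        _ = |θ j| ^ 3 * ∫ ω, ‖X j ω‖ ^ 4 ∂μ := integral_const_mul _ _
    rw [hI, norm_smul, norm_neg, Real.norm_eq_abs]
    calc |θ j| * ‖∫ ω, Z ω ∂μ‖ ≤ |θ j| * (|θ j| ^ 3 * ∫ ω, ‖X j ω‖ ^ 4 ∂μ) := by
          exact mul_le_mul_of_nonneg_left hnormZ (abs_nonneg _)
      _ = |θ j| ^ 4 * ∫ ω, ‖X j ω‖ ^ 4 ∂μ := by ring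
      _ = θ j ^ 4 * ∫ ω, ‖X j ω‖ ^ 4 ∂μ := by rw [← abs_pow, abs_of_nonneg (by positivity)]
  have hsum : ‖∑ j, θ j • ∫ ω, truncV (X j) (θ j) ω ∂μ‖ ≤
      ∑ j, θ j ^ 4 * ∫ ω, ‖X j ω‖ ^ 4 ∂μ := by
    calc ‖∑ j, θ j • ∫ ω, truncV (X j) (θ j) ω ∂μ‖
        ≤ ∑ j, ‖θ j • ∫ ω, truncV (X j) (θ j) ω ∂μ‖ := norm_sum_le _ _
      _ ≤ ∑ j, θ j ^ 4 * ∫ ω, ‖X j ω‖ ^ 4 ∂μ := Finset.sum_le_sum fun j _ => key j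
  have hsnonneg : (0:ℝ) ≤ ∑ j, θ j ^ 4 * ∫ ω, ‖X j ω‖ ^ 4 ∂μ := by
    refine Finset.sum_nonneg fun j _ => mul_nonneg (by positivity) ?_
    exact integral_nonneg fun ω => by positivity
  rcases Nat.eq_zero_or_pos k with hk | hk
  · subst hk
    have : (∑ j, θ j • ∫ ω, truncV (X j) (θ j) ω ∂μ) = 0 := Subsingleton.elim _ _
    rw [this, norm_zero]
    positivity
  · have h1 : (1:ℝ) ≤ Real.sqrt k := by
      rw [show (1:ℝ) = Real.sqrt 1 by simp]
      exact Real.sqrt_le_sqrt (by exact_mod_cast hk)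
    calc ‖∑ j, θ j • ∫ ω, truncV (X j) (θ j) ω ∂μ‖
        ≤ ∑ j, θ j ^ 4 * ∫ ω, ‖X j ω‖ ^ 4 ∂μ := hsum
      _ ≤ Real.sqrt k * ∑ j, θ j ^ 4 * ∫ ω, ‖X j ω‖ ^ 4 ∂μ := le_mul_of_one_le_left hsnonneg h1
end
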